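/- (Theorem 1) Let X ⊆ ℝ^d be finite and satisfy squared δ-separation with δ ≥ 30 with respect to a target partition S* = {C*_1, …, C*_k} with radius R > 0. Run the SCC algorithm on X with d the average squared-distance linkage and geometrically increasing thresholds τ_i = 2^i · τ_0, where 0 < τ_0 ≤ min_{x ≠ x' ∈ X} ‖x − x'‖² and the number L of thresholds satisfies 2^L · τ_0 ≥ 8·R. Then the target partition S* equals one of the partitions produced by the rounds of SCC. -/

import Mathlib

open Finset
open scoped Classical

variable {α : Type*}

/-- One edge of the sub-cluster component graph (Definition 3): `A` and `B` are
distinct clusters of the partition `S`, their linkage is at most `τ`, and one of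
them is the nearest neighbor (argmin of the linkage over `S` minus itself) of
the other. -/
def sccEdge (d : Finset α → Finset α → ℝ) (τ : ℝ)
    (S : Finset (Finset α)) (A B : Finset α) : Prop :=
  A ∈ S ∧ B ∈ S ∧ A ≠ B ∧ d A B ≤ τ ∧
    ((∀ C ∈ S, C ≠ A → d A B ≤ d A C) ∨ (∀ C ∈ S, C ≠ B → d B A ≤ d B C))

/-- The union of all clusters of `S` lying in the same sub-cluster component
as `A` at threshold `τ` (i.e. joined to `A` by a path of `sccEdge` steps). -/
noncomputable def sccComponent (d : Finset α → Finset α → ℝ) (τ : ℝ)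
    (S : Finset (Finset α)) (A : Finset α) : Finset α :=
  (S.filter fun B => Relation.ReflTransGen (sccEdge d τ S) A B).sup id

/-- One round of SCC at threshold `τ`: merge the clusters of each sub-cluster
component. -/
noncomputable def sccRound (d : Finset α → Finset α → ℝ) (τ : ℝ)
    (S : Finset (Finset α)) : Finset (Finset α) :=
  S.image (sccComponent d τ S)

/-- The partitions produced by `n` successive rounds of SCC at threshold `τ`,
starting from `S`. -/
noncomputable def sccAtThreshold (d : Finset α → Finset α → ℝ) (τ : ℝ)
    (n : ℕ) (S : Finset (Finset α)) : List (Finset (Finset α)) :=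
  (List.range n).map fun k => (sccRound d τ)^[k + 1] S

/-- The partition of `X` into singletons, the starting partition of SCC. -/
noncomputable def singletonPartition (X : Finset α) : Finset (Finset α) :=
  X.image fun x => {x}

/-- The list of partitions produced by the rounds of the Sub-Cluster Component
algorithm on `X` with linkage `d` and the increasing thresholds `τs`: starting
from singletons, for each threshold the round operation is iterated until it
stabilizes (running `X.card` rounds per threshold guarantees stabilization,
after which the threshold advances). -/
noncomputable def sccPartitions (X : Finset α) (d : Finset α → Finset α → ℝ)
    (τs : List ℝ) : List (Finset (Finset α)) :=
  τs.foldl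
    (fun acc τ =>
      acc ++ sccAtThreshold d τ X.card (acc.getLastD (singletonPartition X)))
    [singletonPartition X]

/-- The average squared-distance linkage between two finite sets of points. -/
noncomputable def avgLinkage {d : ℕ}
    (A B : Finset (EuclideanSpace ℝ (Fin d))) : ℝ :=
  (∑ a ∈ A, ∑ b ∈ B, ‖a - b‖ ^ 2) / ((A.card : ℝ) * (B.card : ℝ))

section AuxComb

/-- the invariant: `S` is a partition of `X` refining `Sstar`. -/
def GoodPart (X : Finset α) (Sstar S : Finset (Finset α)) : Prop :=
  (∀ A ∈ S, A.Nonempty) ∧ (∀ A ∈ S, ∃ C ∈ Sstar, A ⊆ C) ∧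
    (∀ A ∈ S, ∀ B ∈ S, A ≠ B → Disjoint A B) ∧ S.sup id = X

section
variable {X : Finset α} {Sstar : Finset (Finset α)}
lemma target_uniq (hdisj : ∀ A ∈ Sstar, ∀ B ∈ Sstar, A ≠ B → Disjoint A B) {A C C' : Finset α} (hA : A.Nonempty) (hC : C ∈ Sstar)
    (hC' : C' ∈ Sstar) (h1 : A ⊆ C) (h2 : A ⊆ C') : C = C' := by
  by_contra hne
  obtain ⟨x, hx⟩ := hA
  exact (Finset.disjoint_left.mp (hdisj C hC C' hC' hne) (h1 hx)) (h2 hx)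

variable {dd : Finset α → Finset α → ℝ} {τ : ℝ} {S : Finset (Finset α)}

lemma sccEdge_symm (hsym : ∀ A B, dd A B = dd B A) :
    Symmetric (sccEdge dd τ S) := by
  rintro A B ⟨hA, hB, hne, hle, hmin⟩
  exact ⟨hB, hA, hne.symm, (hsym B A) ▸ hle, hmin.symm⟩

lemma subset_sccComponent {A : Finset α} (hA : A ∈ S) :
    A ⊆ sccComponent dd τ S A :=
  Finset.le_sup (f := id) (Finset.mem_filter.mpr ⟨hA, Relation.ReflTransGen.refl⟩)

lemma sccComponent_nonempty {A : Finset α} (hA : A ∈ S) (hne : A.Nonempty) :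
    (sccComponent dd τ S A).Nonempty :=
  hne.mono (subset_sccComponent hA)

/-- if every edge links two clusters inside a common target, the component of
`A` stays inside the target of `A`. -/
lemma sccComponent_subset (hdisj : ∀ A ∈ Sstar, ∀ B ∈ Sstar, A ≠ B → Disjoint A B)
    (hedge : ∀ A B, sccEdge dd τ S A B →
      ∃ C ∈ Sstar, A ⊆ C ∧ B ⊆ C ∧ A.Nonempty ∧ B.Nonempty)
    {A C : Finset α} (hC : C ∈ Sstar) (hAC : A ⊆ C) (hAne : A.Nonempty) :
    sccComponent dd τ S A ⊆ C := by
  have key : ∀ B, Relation.ReflTransGen (sccEdge dd τ S) A B → B ⊆ C ∧ B.Nonempty := by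
    intro B h
    induction h with
    | refl => exact ⟨hAC, hAne⟩
    | tail _ e ih =>
      obtain ⟨C', hC', h1, h2, h1ne, h2ne⟩ := hedge _ _ e
      have hCC : C' = C := target_uniq hdisj h1ne hC' hC h1 ih.1
      exact ⟨hCC ▸ h2, h2ne⟩
  intro x hx
  rw [sccComponent, Finset.mem_sup] at hx
  obtain ⟨B, hBf, hxB⟩ := hx
  rw [Finset.mem_filter] at hBf
  exact (key B hBf.2).1 hxB
end

section
variable {X : Finset α} {Sstar : Finset (Finset α)}
variable {dd : Finset α → Finset α → ℝ} {τ : ℝ} {S : Finset (Finset α)}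

lemma sccComponent_eq_of_rel (hsym : ∀ A B, dd A B = dd B A) {A B : Finset α}
    (h : Relation.ReflTransGen (sccEdge dd τ S) A B) :
    sccComponent dd τ S A = sccComponent dd τ S B := by
  have hsymE : Symmetric (Relation.ReflTransGen (sccEdge dd τ S)) := by
    haveI : Std.Symm (sccEdge dd τ S) := ⟨sccEdge_symm (S := S) (τ := τ) hsym⟩
    exact fun a b h => Std.Symm.symm a b h
  unfold sccComponent
  congr 1
  apply Finset.filter_congr
  intro B' _
  exact ⟨fun h' => (hsymE h).trans h', fun h' => h.trans h'⟩

lemma sccComponent_disjoint (hsym : ∀ A B, dd A B = dd B A)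
    (hG : GoodPart X Sstar S) {A B : Finset α}
    (hnrel : ¬ Relation.ReflTransGen (sccEdge dd τ S) A B) :
    Disjoint (sccComponent dd τ S A) (sccComponent dd τ S B) := by
  have hsymE : Symmetric (Relation.ReflTransGen (sccEdge dd τ S)) := by
    haveI : Std.Symm (sccEdge dd τ S) := ⟨sccEdge_symm (S := S) (τ := τ) hsym⟩
    exact fun a b h => Std.Symm.symm a b h
  rw [Finset.disjoint_left]
  intro x hxA hxB
  rw [sccComponent, Finset.mem_sup] at hxA hxB
  obtain ⟨B1, hB1, hx1⟩ := hxA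
  obtain ⟨B2, hB2, hx2⟩ := hxB
  rw [Finset.mem_filter] at hB1 hB2
  by_cases h12 : B1 = B2
  · exact hnrel (hB1.2.trans (h12 ▸ hsymE hB2.2))
  · exact Finset.disjoint_left.mp (hG.2.2.1 B1 hB1.1 B2 hB2.1 h12) hx1 hx2

/-- one round of SCC preserves the invariant, provided every edge stays within
a target cluster. -/
lemma goodPart_sccRound (hsym : ∀ A B, dd A B = dd B A)
    (hdisjT : ∀ A ∈ Sstar, ∀ B ∈ Sstar, A ≠ B → Disjoint A B)
    (hG : GoodPart X Sstar S)
    (hedge : ∀ A B, sccEdge dd τ S A B →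
      ∃ C ∈ Sstar, A ⊆ C ∧ B ⊆ C ∧ A.Nonempty ∧ B.Nonempty) :
    GoodPart X Sstar (sccRound dd τ S) := by
  obtain ⟨hne, href, hdis, hcov⟩ := hG
  refine ⟨?_, ?_, ?_, ?_⟩
  · rintro A' hA'
    obtain ⟨A, hA, rfl⟩ := Finset.mem_image.mp hA'
    exact sccComponent_nonempty hA (hne A hA)
  · rintro A' hA'
    obtain ⟨A, hA, rfl⟩ := Finset.mem_image.mp hA'
    obtain ⟨C, hC, hAC⟩ := href A hA
    exact ⟨C, hC, sccComponent_subset hdisjT hedge hC hAC (hne A hA)⟩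
  · rintro A' hA' B' hB' hne'
    obtain ⟨A, hA, rfl⟩ := Finset.mem_image.mp hA'
    obtain ⟨B, hB, rfl⟩ := Finset.mem_image.mp hB'
    by_cases hrel : Relation.ReflTransGen (sccEdge dd τ S) A B
    · exact absurd (sccComponent_eq_of_rel hsym hrel) hne'
    · exact sccComponent_disjoint hsym ⟨hne, href, hdis, hcov⟩ hrel
  · rw [sccRound, Finset.sup_image]
    apply le_antisymm
    · apply Finset.sup_le
      intro A hA
      calc (id ∘ sccComponent dd τ S) A
          = (S.filter fun B => Relation.ReflTransGen (sccEdge dd τ S) A B).sup id := rfl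
        _ ≤ S.sup id := Finset.sup_mono (Finset.filter_subset _ _)
        _ = X := hcov
    · calc X = S.sup id := hcov.symm
        _ ≤ S.sup (id ∘ sccComponent dd τ S) :=
          Finset.sup_mono_fun fun A hA => subset_sccComponent hA
end

section
variable {X : Finset α} {Sstar : Finset (Finset α)}
variable {dd : Finset α → Finset α → ℝ} {τ : ℝ} {S : Finset (Finset α)}

lemma sccRound_eq_of_no_edge (hno : ∀ A B, ¬ sccEdge dd τ S A B) :
    sccRound dd τ S = S := by
  have hcomp : ∀ A ∈ S, sccComponent dd τ S A = A := by
    intro A hA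
    have hfil : (S.filter fun B => Relation.ReflTransGen (sccEdge dd τ S) A B) = {A} := by
      ext B
      simp only [Finset.mem_filter, Finset.mem_singleton]
      constructor
      · rintro ⟨hB, hrel⟩
        rcases hrel.cases_head with h | ⟨c, hc, -⟩
        · exact h.symm
        · exact absurd hc (hno A c)
      · rintro rfl
        exact ⟨hA, Relation.ReflTransGen.refl⟩
    rw [sccComponent, hfil, Finset.sup_singleton, id]
  rw [sccRound, Finset.image_congr hcomp]
  simp

lemma exists_pair_of_ne (hneT : ∀ C ∈ Sstar, C.Nonempty)
    (hdisjT : ∀ A ∈ Sstar, ∀ B ∈ Sstar, A ≠ B → Disjoint A B)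
    (hcovT : Sstar.sup id = X)
    (hG : GoodPart X Sstar S) (hneS : S ≠ Sstar) :
    ∃ A ∈ S, ∃ B ∈ S, A ≠ B ∧ ∃ C ∈ Sstar, A ⊆ C ∧ B ⊆ C := by
  obtain ⟨hne, href, hdis, hcov⟩ := hG
  by_contra hcon
  push_neg at hcon
  have huniq : ∀ A ∈ S, ∀ B ∈ S, ∀ C ∈ Sstar, A ⊆ C → B ⊆ C → A = B := by
    intro A hA B hB C hC h1 h2
    by_contra hAB
    exact hcon A hA B hB hAB C hC h1 h2
  have hmemX : ∀ {x : α}, x ∈ X → ∃ B ∈ S, x ∈ B := by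
    intro x hx
    rw [← hcov] at hx
    exact Finset.mem_sup.mp hx
  have htarget_eq : ∀ {x : α} {C C' : Finset α}, C ∈ Sstar → C' ∈ Sstar →
      x ∈ C → x ∈ C' → C = C' := by
    intro x C C' hC hC' hx hx'
    by_contra hCC
    exact Finset.disjoint_left.mp (hdisjT C hC C' hC' hCC) hx hx'
  have hSsub : ∀ A ∈ S, A ∈ Sstar := by
    intro A hA
    obtain ⟨C, hC, hAC⟩ := href A hA
    have hCA : C ⊆ A := by
      intro x hxC
      have hxX : x ∈ X := by
        rw [← hcovT]; exact Finset.mem_sup.mpr ⟨C, hC, hxC⟩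
      obtain ⟨B, hB, hxB⟩ := hmemX hxX
      obtain ⟨C', hC', hBC'⟩ := href B hB
      have : C' = C := htarget_eq hC' hC (hBC' hxB) hxC
      have hABeq : A = B := huniq A hA B hB C hC hAC (this ▸ hBC')
      exact hABeq ▸ hxB
    have : A = C := Finset.Subset.antisymm hAC hCA
    exact this ▸ hC
  apply hneS
  apply Finset.Subset.antisymm (fun A hA => hSsub A hA)
  intro C hC
  obtain ⟨x, hx⟩ := hneT C hC
  have hxX : x ∈ X := by rw [← hcovT]; exact Finset.mem_sup.mpr ⟨C, hC, hx⟩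
  obtain ⟨B, hB, hxB⟩ := hmemX hxX
  have hBstar : B ∈ Sstar := hSsub B hB
  have : B = C := htarget_eq hBstar hC hxB hx
  exact this ▸ hB
end

section
variable {X : Finset α} {Sstar : Finset (Finset α)}
variable {dd : Finset α → Finset α → ℝ} {τ : ℝ} {S : Finset (Finset α)}

lemma sccRound_card_lt (hsym : ∀ A B, dd A B = dd B A) {A B : Finset α}
    (hA : A ∈ S) (hB : B ∈ S) (hABne : A ≠ B) (hd : dd A B ≤ τ) :
    (sccRound dd τ S).card < S.card := by
  have herne : (S.erase A).Nonempty := ⟨B, Finset.mem_erase.mpr ⟨hABne.symm, hB⟩⟩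
  obtain ⟨B0, hB0, hmin⟩ := Finset.exists_min_image (S.erase A) (dd A) herne
  have hB0S := Finset.mem_of_mem_erase hB0
  have hB0A : B0 ≠ A := Finset.ne_of_mem_erase hB0
  have hdle : dd A B0 ≤ τ := le_trans (hmin B (Finset.mem_erase.mpr ⟨hABne.symm, hB⟩)) hd
  have hedge : sccEdge dd τ S A B0 :=
    ⟨hA, hB0S, hB0A.symm, hdle,
      Or.inl fun C hC hCA => hmin C (Finset.mem_erase.mpr ⟨hCA, hC⟩)⟩
  have hcomp := sccComponent_eq_of_rel hsym (Relation.ReflTransGen.single hedge)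
  have h1 : (sccRound dd τ S).card ≤ S.card := Finset.card_image_le
  have h2 : (sccRound dd τ S).card ≠ S.card := by
    intro h
    exact hB0A (Finset.card_image_iff.mp h hB0S hA hcomp.symm)
  exact lt_of_le_of_ne h1 h2

lemma goodPart_card_le (hG : GoodPart X Sstar S) : S.card ≤ X.card := by
  obtain ⟨hne, href, hdis, hcov⟩ := hG
  rcases S.eq_empty_or_nonempty with rfl | ⟨A0, hA0⟩
  · simp
  · obtain ⟨x0, _⟩ := hne A0 hA0
    have : Inhabited α := ⟨x0⟩
    apply Finset.card_le_card_of_injOn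
      (fun A => if h : A.Nonempty then h.choose else default)
    · intro A hA
      have hAne := hne A hA
      simp only [dif_pos hAne]
      have hx : hAne.choose ∈ A := hAne.choose_spec
      rw [← hcov]
      exact Finset.mem_sup.mpr ⟨A, hA, hx⟩
    · intro A hA B hB hfeq
      by_contra hAB
      have hAne := hne A (Finset.mem_coe.mp hA)
      have hBne := hne B (Finset.mem_coe.mp hB)
      simp only [dif_pos hAne, dif_pos hBne] at hfeq
      exact Finset.disjoint_left.mp
        (hdis A (Finset.mem_coe.mp hA) B (Finset.mem_coe.mp hB) hAB)
        hAne.choose_spec (hfeq ▸ hBne.choose_spec)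

lemma sccRound_reaches_target
    (hfix : sccRound dd τ Sstar = Sstar)
    (hgood : ∀ T, GoodPart X Sstar T → GoodPart X Sstar (sccRound dd τ T))
    (hstep : ∀ T, GoodPart X Sstar T → T ≠ Sstar → (sccRound dd τ T).card < T.card)
    (hbase : ∀ T, GoodPart X Sstar T → T.card ≤ 1 → T = Sstar) :
    ∀ (m : ℕ) (T : Finset (Finset α)), GoodPart X Sstar T → T.card ≤ m + 1 →
      (sccRound dd τ)^[m] T = Sstar := by
  intro m
  induction m with
  | zero =>
    intro T hG hc
    simpa using hbase T hG hc
  | succ m ih =>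
    intro T hG hc
    by_cases hT : T = Sstar
    · subst hT
      exact Function.iterate_fixed hfix (m + 1)
    · rw [Function.iterate_succ_apply]
      exact ih (sccRound dd τ T) (hgood T hG)
        (by have := hstep T hG hT; omega)
end

section
variable {X : Finset α} {Sstar : Finset (Finset α)}
variable {dd : Finset α → Finset α → ℝ} {τ : ℝ}

lemma mem_foldl_acc {β : Type*} (g : List β → ℝ → List β) (x : β) :
    ∀ (l : List ℝ) (acc : List β), x ∈ acc →
      x ∈ l.foldl (fun acc τ => acc ++ g acc τ) acc := by
  intro l
  induction l with
  | nil => intro acc h; exact h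
  | cons τ l ih => intro acc h; exact ih _ (List.mem_append_left _ h)

lemma sccAtThreshold_concat (dd : Finset α → Finset α → ℝ) (τ : ℝ) (m : ℕ)
    (S : Finset (Finset α)) :
    sccAtThreshold dd τ (m + 1) S =
      ((List.range m).map fun k => (sccRound dd τ)^[k + 1] S) ++
        [(sccRound dd τ)^[m + 1] S] := by
  rw [sccAtThreshold, List.range_succ, List.map_append]
  rfl

lemma lastD_foldl (dd : Finset α → Finset α → ℝ) (m : ℕ)
    (s0 : Finset (Finset α)) :
    ∀ (l : List ℝ) (acc : List (Finset (Finset α))) (S : Finset (Finset α)),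
      acc.getLastD s0 = S →
      (l.foldl (fun acc τ => acc ++ sccAtThreshold dd τ (m + 1) (acc.getLastD s0))
          acc).getLastD s0
        = l.foldl (fun S τ => (sccRound dd τ)^[m + 1] S) S := by
  intro l
  induction l with
  | nil => intro acc S h; exact h
  | cons τ l ih =>
    intro acc S h
    rw [List.foldl_cons, List.foldl_cons]
    apply ih
    rw [h, sccAtThreshold_concat, ← List.append_assoc, List.getLastD_concat]

lemma goodPart_iterate
    (hgood : ∀ T, GoodPart X Sstar T → GoodPart X Sstar (sccRound dd τ T)) :
    ∀ (k : ℕ) (T : Finset (Finset α)), GoodPart X Sstar T →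
      GoodPart X Sstar ((sccRound dd τ)^[k] T) := by
  intro k
  induction k with
  | zero => intro T h; exact h
  | succ k ih =>
    intro T h
    rw [Function.iterate_succ_apply']
    exact hgood _ (ih T h)

lemma goodPart_foldl (m : ℕ) :
    ∀ (l : List ℝ) (S : Finset (Finset α)),
      (∀ τ' ∈ l, ∀ T, GoodPart X Sstar T → GoodPart X Sstar (sccRound dd τ' T)) →
      GoodPart X Sstar S →
      GoodPart X Sstar (l.foldl (fun S τ => (sccRound dd τ)^[m + 1] S) S) := by
  intro l
  induction l with
  | nil => intro S _ h; exact h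
  | cons τ' l ih =>
    intro S hl h
    rw [List.foldl_cons]
    exact ih _ (fun τ'' h'' => hl τ'' (List.mem_cons_of_mem _ h''))
      (goodPart_iterate (hl τ' List.mem_cons_self) (m + 1) S h)
end

end AuxComb

section AuxGeom
variable {d : ℕ}

lemma avgLinkage_comm (A B : Finset (EuclideanSpace ℝ (Fin d))) :
    avgLinkage A B = avgLinkage B A := by
  unfold avgLinkage
  rw [Finset.sum_comm, mul_comm]
  congr 1
  exact Finset.sum_congr rfl fun b _ => Finset.sum_congr rfl fun a _ => by rw [norm_sub_rev]

lemma le_avgLinkage {A B : Finset (EuclideanSpace ℝ (Fin d))} (hA : A.Nonempty)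
    (hB : B.Nonempty) {c : ℝ} (h : ∀ a ∈ A, ∀ b ∈ B, c ≤ ‖a - b‖ ^ 2) :
    c ≤ avgLinkage A B := by
  have hA' : (0:ℝ) < A.card := by exact_mod_cast hA.card_pos
  have hB' : (0:ℝ) < B.card := by exact_mod_cast hB.card_pos
  rw [avgLinkage, le_div_iff₀ (by positivity)]
  calc c * ((A.card : ℝ) * B.card) = ∑ _a ∈ A, ((B.card : ℝ) * c) := by
        rw [Finset.sum_const, nsmul_eq_mul]; ring
    _ ≤ ∑ a ∈ A, ∑ b ∈ B, ‖a - b‖ ^ 2 := Finset.sum_le_sum fun a ha => by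
        have := Finset.card_nsmul_le_sum B (fun b => ‖a - b‖ ^ 2) c (h a ha)
        rwa [nsmul_eq_mul] at this

lemma avgLinkage_le {A B : Finset (EuclideanSpace ℝ (Fin d))} (hA : A.Nonempty)
    (hB : B.Nonempty) {c : ℝ} (h : ∀ a ∈ A, ∀ b ∈ B, ‖a - b‖ ^ 2 ≤ c) :
    avgLinkage A B ≤ c := by
  have hA' : (0:ℝ) < A.card := by exact_mod_cast hA.card_pos
  have hB' : (0:ℝ) < B.card := by exact_mod_cast hB.card_pos
  rw [avgLinkage, div_le_iff₀ (by positivity)]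
  calc ∑ a ∈ A, ∑ b ∈ B, ‖a - b‖ ^ 2 ≤ ∑ _a ∈ A, ((B.card : ℝ) * c) :=
        Finset.sum_le_sum fun a ha => by
          have := Finset.sum_le_card_nsmul B (fun b => ‖a - b‖ ^ 2) c (h a ha)
          rwa [nsmul_eq_mul] at this
    _ = c * ((A.card : ℝ) * B.card) := by rw [Finset.sum_const, nsmul_eq_mul]; ring

lemma within_bound {x y c : EuclideanSpace ℝ (Fin d)} {R : ℝ}
    (hx : ‖x - c‖ ^ 2 ≤ R) (hy : ‖y - c‖ ^ 2 ≤ R) : ‖x - y‖ ^ 2 ≤ 4 * R := by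
  have h1 : ‖x - y‖ ≤ ‖x - c‖ + ‖y - c‖ := by
    have := norm_sub_le (x - c) (y - c)
    simpa [sub_sub_sub_cancel_right] using this
  nlinarith [norm_nonneg (x - y), norm_nonneg (x - c), norm_nonneg (y - c),
    sq_nonneg (‖x - c‖ - ‖y - c‖)]

lemma cross_bound {x y cA cB : EuclideanSpace ℝ (Fin d)} {R : ℝ}
    (hc : 30 * R ≤ ‖cA - cB‖ ^ 2) (hx : ‖x - cA‖ ^ 2 ≤ R) (hy : ‖y - cB‖ ^ 2 ≤ R) :
    9 * R ≤ ‖x - y‖ ^ 2 := by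
  have h1 : ‖cA - cB‖ ≤ ‖x - cA‖ + ‖x - y‖ + ‖y - cB‖ := by
    have := dist_triangle4 cA x y cB
    simp only [dist_eq_norm] at this
    calc ‖cA - cB‖ ≤ ‖cA - x‖ + ‖x - y‖ + ‖y - cB‖ := this
      _ = ‖x - cA‖ + ‖x - y‖ + ‖y - cB‖ := by rw [norm_sub_rev cA x]
  have h2 : ‖cA - cB‖ ^ 2 ≤ (‖x - cA‖ + ‖x - y‖ + ‖y - cB‖) ^ 2 :=
    pow_le_pow_left₀ (norm_nonneg _) h1 2
  nlinarith [norm_nonneg (x - y), norm_nonneg (x - cA), norm_nonneg (y - cB),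
    sq_nonneg (‖x - cA‖ - ‖y - cB‖), sq_nonneg (‖x - y‖ - 3 * ‖x - cA‖),
    sq_nonneg (‖x - y‖ - 3 * ‖y - cB‖)]

end AuxGeom

/-- **Theorem 1.** On squared `δ`-separated data with `δ ≥ 30`,
SCC with average squared-distance linkage and geometrically increasing
thresholds `τ_i = 2^i · τ0`, with `τ0` at most the minimum pairwise squared
distance and `2^L · τ0 ≥ 8R`, produces the target partition in one of its
rounds. -/
theorem scc_recovers_target_partition {d : ℕ}
    (X : Finset (EuclideanSpace ℝ (Fin d)))
    (Sstar : Finset (Finset (EuclideanSpace ℝ (Fin d))))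
    (cen : Finset (EuclideanSpace ℝ (Fin d)) → EuclideanSpace ℝ (Fin d))
    (δ R τ0 : ℝ) (L : ℕ) (hδ : 30 ≤ δ) (hR : 0 < R)
    -- `Sstar` is a partition of `X`
    (hne : ∀ A ∈ Sstar, A.Nonempty)
    (hdisj : ∀ A ∈ Sstar, ∀ B ∈ Sstar, A ≠ B → Disjoint A B)
    (hcover : Sstar.sup id = X)
    -- `R` is the maximal squared distance of a point to its cluster center
    (hRle : ∀ A ∈ Sstar, ∀ x ∈ A, ‖x - cen A‖ ^ 2 ≤ R)
    (hRmax : ∃ A ∈ Sstar, ∃ x ∈ A, ‖x - cen A‖ ^ 2 = R)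
    -- squared `δ`-separation of the centers
    (hsep : ∀ A ∈ Sstar, ∀ B ∈ Sstar, A ≠ B → δ * R ≤ ‖cen A - cen B‖ ^ 2)
    -- thresholds: `τ0` below the minimum pairwise squared distance, last one `≥ 8R`
    (hτ0pos : 0 < τ0)
    (hτ0 : ∀ x ∈ X, ∀ y ∈ X, x ≠ y → τ0 ≤ ‖x - y‖ ^ 2)
    (hL : 8 * R ≤ 2 ^ L * τ0) :
    Sstar ∈
      sccPartitions X avgLinkage ((List.range (L + 1)).map fun i => 2 ^ i * τ0) := by
  letI : DecidableEq (EuclideanSpace ℝ (Fin d)) := fun a b => Classical.propDecidable _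
  replace hcover : Sstar.sup id = X := by convert hcover
  set s0 := singletonPartition X with hs0
  have hXcov : ∀ {A}, A ∈ Sstar → A ⊆ X := by
    intro A hA x hx
    rw [← hcover]; exact Finset.mem_sup.mpr ⟨A, hA, hx⟩
  have hXne : X.Nonempty := by
    obtain ⟨A, hA, x, hx, -⟩ := hRmax
    exact ⟨x, hXcov hA hx⟩
  obtain ⟨m, hm⟩ : ∃ m, X.card = m + 1 := ⟨X.card - 1, by have := hXne.card_pos; omega⟩
  have hupp : ∀ C ∈ Sstar, ∀ x ∈ C, ∀ y ∈ C, ‖x - y‖ ^ 2 ≤ 4 * R :=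
    fun C hC x hx y hy => within_bound (hRle C hC x hx) (hRle C hC y hy)
  have hlow : ∀ A ∈ Sstar, ∀ B ∈ Sstar, A ≠ B → ∀ x ∈ A, ∀ y ∈ B,
      9 * R ≤ ‖x - y‖ ^ 2 := by
    intro A hA B hB hne' x hx y hy
    have h30 : 30 * R ≤ ‖cen A - cen B‖ ^ 2 :=
      le_trans (by nlinarith) (hsep A hA B hB hne')
    exact cross_bound h30 (hRle A hA x hx) (hRle B hB y hy)
  have hsym : ∀ A B : Finset (EuclideanSpace ℝ (Fin d)),
      avgLinkage A B = avgLinkage B A := avgLinkage_comm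
  have hGs0 : GoodPart X Sstar s0 := by
    refine ⟨?_, ?_, ?_, ?_⟩
    · rintro A hA
      obtain ⟨x, hx, rfl⟩ := Finset.mem_image.mp hA
      exact ⟨x, Finset.mem_singleton_self x⟩
    · rintro A hA
      obtain ⟨x, hx, rfl⟩ := Finset.mem_image.mp hA
      rw [← hcover] at hx
      obtain ⟨C, hC, hxC⟩ := Finset.mem_sup.mp hx
      exact ⟨C, hC, Finset.singleton_subset_iff.mpr hxC⟩
    · rintro A hA B hB hAB
      obtain ⟨x, hx, rfl⟩ := Finset.mem_image.mp hA
      obtain ⟨y, hy, rfl⟩ := Finset.mem_image.mp hB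
      rw [Finset.disjoint_singleton]
      exact fun h => hAB (by rw [h])
    · ext a
      rw [Finset.mem_sup]
      constructor
      · rintro ⟨B, hB, haB⟩
        obtain ⟨x, hx, rfl⟩ := Finset.mem_image.mp hB
        rw [id, Finset.mem_singleton] at haB
        exact haB ▸ hx
      · intro ha
        exact ⟨{a}, Finset.mem_image_of_mem _ ha, Finset.mem_singleton_self a⟩
  by_cases hsing : ∀ C ∈ Sstar, ∀ x ∈ C, ∀ y ∈ C, x = y
  · have hSeq : Sstar = s0 := by
      ext A
      constructor
      · intro hA
        obtain ⟨x, hx⟩ := hne A hA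
        have hAx : A = {x} := Finset.eq_singleton_iff_unique_mem.mpr
          ⟨hx, fun y hy => hsing A hA y hy x hx⟩
        exact Finset.mem_image.mpr ⟨x, hXcov hA hx, hAx.symm⟩
      · intro hA
        obtain ⟨x, hx, rfl⟩ := Finset.mem_image.mp hA
        rw [← hcover] at hx
        obtain ⟨C, hC, hxC⟩ := Finset.mem_sup.mp hx
        have : C = {x} := Finset.eq_singleton_iff_unique_mem.mpr
          ⟨hxC, fun y hy => hsing C hC y hy x hxC⟩
        exact this ▸ hC
    rw [hSeq]
    unfold sccPartitions
    exact mem_foldl_acc _ _ _ _ (List.mem_singleton.mpr rfl)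
  · push_neg at hsing
    obtain ⟨C0, hC0, x0, hx0, y0, hy0, hxy0⟩ := hsing
    have hτ04 : τ0 ≤ 4 * R :=
      le_trans (hτ0 x0 (hXcov hC0 hx0) y0 (hXcov hC0 hy0) hxy0)
        (hupp C0 hC0 x0 hx0 y0 hy0)
    have hex : ∃ i, 4 * R ≤ 2 ^ i * τ0 := ⟨L, by linarith⟩
    set i0 := Nat.find hex with hi0def
    have h4 : 4 * R ≤ 2 ^ i0 * τ0 := Nat.find_spec hex
    have hi0L : i0 ≤ L := Nat.find_le (by linarith)
    have h9 : 2 ^ i0 * τ0 < 9 * R := by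
      rcases Nat.eq_zero_or_pos i0 with h | h
      · rw [h, pow_zero, one_mul]; linarith
      · obtain ⟨j, hj⟩ : ∃ j, i0 = j + 1 := ⟨i0 - 1, by omega⟩
        have hmin := Nat.find_min hex (show j < i0 by omega)
        push_neg at hmin
        rw [hj, pow_succ]
        nlinarith
    have hjlt : ∀ j < i0, 2 ^ j * τ0 < 9 * R := by
      intro j hj
      have := Nat.find_min hex hj
      push_neg at this
      linarith
    have hedge : ∀ τ, τ < 9 * R → ∀ T, GoodPart X Sstar T →
        ∀ A B, sccEdge avgLinkage τ T A B →
          ∃ C ∈ Sstar, A ⊆ C ∧ B ⊆ C ∧ A.Nonempty ∧ B.Nonempty := by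
      intro τ hτ T hG A B hAB
      obtain ⟨hne1, href, hdis, hcov'⟩ := hG
      obtain ⟨hA, hB, hABne, hle, -⟩ := hAB
      obtain ⟨CA, hCA, hACA⟩ := href A hA
      obtain ⟨CB, hCB, hBCB⟩ := href B hB
      have hAne := hne1 A hA
      have hBne := hne1 B hB
      by_cases hCC : CA = CB
      · exact ⟨CA, hCA, hACA, hCC ▸ hBCB, hAne, hBne⟩
      · exfalso
        have h9' : 9 * R ≤ avgLinkage A B :=
          le_avgLinkage hAne hBne fun x hx y hy =>
            hlow CA hCA CB hCB hCC x (hACA hx) y (hBCB hy)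
        linarith
    have hgoodR : ∀ τ, τ < 9 * R → ∀ T, GoodPart X Sstar T →
        GoodPart X Sstar (sccRound avgLinkage τ T) :=
      fun τ hτ T hG => goodPart_sccRound hsym hdisj hG (hedge τ hτ T hG)
    have hfix : ∀ τ, τ < 9 * R → sccRound avgLinkage τ Sstar = Sstar := by
      intro τ hτ
      apply sccRound_eq_of_no_edge
      rintro A B ⟨hA, hB, hABne, hle, -⟩
      have := le_avgLinkage (hne A hA) (hne B hB) fun x hx y hy =>
        hlow A hA B hB hABne x hx y hy
      linarith
    have hstep : ∀ T, GoodPart X Sstar T → T ≠ Sstar →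
        (sccRound avgLinkage (2 ^ i0 * τ0) T).card < T.card := by
      intro T hG hT
      obtain ⟨A, hA, B, hB, hABne, C, hC, hAC, hBC⟩ :=
        exists_pair_of_ne hne hdisj hcover hG hT
      apply sccRound_card_lt hsym hA hB hABne
      have : avgLinkage A B ≤ 4 * R :=
        avgLinkage_le (hG.1 A hA) (hG.1 B hB) fun x hx y hy =>
          hupp C hC x (hAC hx) y (hBC hy)
      linarith
    have hbase : ∀ T, GoodPart X Sstar T → T.card ≤ 1 → T = Sstar := by
      intro T hG hc
      by_contra hT
      obtain ⟨A, hA, B, hB, hABne, -⟩ := exists_pair_of_ne hne hdisj hcover hG hT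
      have := Finset.one_lt_card.mpr ⟨A, hA, B, hB, hABne⟩
      omega
    have hsplit : List.range (L + 1)
        = List.range i0 ++ i0 :: (List.range (L + 1)).drop (i0 + 1) := by
      conv_lhs => rw [← List.take_append_drop (i0 + 1) (List.range (L + 1))]
      rw [List.take_range, min_eq_left (by omega), List.range_succ,
        List.append_assoc]
      rfl
    have hmapeq := congrArg (List.map fun i => (2:ℝ) ^ i * τ0) hsplit
    rw [List.map_append, List.map_cons] at hmapeq
    unfold sccPartitions
    rw [hm, hmapeq, List.foldl_append, List.foldl_cons]
    set l1 := (List.range i0).map fun i => (2:ℝ) ^ i * τ0 with hl1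
    set acc1 := l1.foldl
      (fun acc τ => acc ++ sccAtThreshold avgLinkage τ (m + 1) (acc.getLastD s0))
      [s0] with hacc1
    set S1 := l1.foldl (fun S τ => (sccRound avgLinkage τ)^[m + 1] S) s0 with hS1
    have hlast : acc1.getLastD s0 = S1 :=
      lastD_foldl avgLinkage m s0 l1 [s0] s0 (by simp)
    have hGS1 : GoodPart X Sstar S1 := by
      apply goodPart_foldl m l1 s0 ?_ hGs0
      intro τ' hτ' T hG
      obtain ⟨j, hj, rfl⟩ := List.mem_map.mp hτ'
      exact hgoodR _ (hjlt j (List.mem_range.mp hj)) T hG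
    have hc1 : S1.card ≤ m + 1 := hm ▸ goodPart_card_le hGS1
    have htarget : (sccRound avgLinkage (2 ^ i0 * τ0))^[m + 1] S1 = Sstar :=
      sccRound_reaches_target (hfix _ h9) (fun T hG => hgoodR _ h9 T hG) hstep hbase
        (m + 1) S1 hGS1 (by omega)
    apply mem_foldl_acc
      (fun acc τ => sccAtThreshold avgLinkage τ (m + 1) (acc.getLastD s0))
    apply List.mem_append_right
    rw [hlast, sccAtThreshold_concat]
    exact List.mem_append_right _ (List.mem_singleton.mpr htarget.symm)
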